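/- Let k : ℝ^d → ℝ be continuous and integrable with integrable Fourier transform k̂ satisfying k̂(ξ) ≥ 0 for all ξ ∈ ℝ^d, and with k(0) = 1. Let x_1,…,x_N ∈ ℝ^d, let K be the N×N matrix with entries K_{ij} = k(x_i − x_j), and let σ > 0. Then K + σ²I is invertible and its condition number satisfies κ(K + σ²I) := ‖K + σ²I‖ · ‖(K + σ²I)^{-1}‖ ≤ N/σ² + 1, where ‖·‖ denotes the operator (spectral) norm. -/

import Mathlib

open MeasureTheory

/-- The Fourier transform `k̂(ξ) = ∫ k(x) e^{−2πi⟨ξ,x⟩} dx` on `ℝ^d`. -/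
noncomputable def fourierT (d : ℕ) (k : EuclideanSpace ℝ (Fin d) → ℝ)
    (ξ : EuclideanSpace ℝ (Fin d)) : ℂ :=
  ∫ x : EuclideanSpace ℝ (Fin d),
    (k x : ℂ) * Complex.exp (-(2 * (Real.pi : ℂ) * Complex.I * ((∑ i, ξ i * x i : ℝ) : ℂ)))

/-- Operator (spectral) norm of a real square matrix, induced by the Euclidean norm. -/
noncomputable def opNorm {N : ℕ} (A : Matrix (Fin N) (Fin N) ℝ) : ℝ :=
  ‖Matrix.toEuclideanCLM (𝕜 := ℝ) A‖

open FourierTransform RealInnerProductSpace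

namespace Stmt13Aux

variable {d : ℕ} {k : EuclideanSpace ℝ (Fin d) → ℝ}

noncomputable def ee (ξ y : EuclideanSpace ℝ (Fin d)) : ℂ :=
  Complex.exp ((2 * Real.pi * ⟪ξ, y⟫ : ℝ) * Complex.I)

lemma ee_norm (ξ y : EuclideanSpace ℝ (Fin d)) : ‖ee ξ y‖ = 1 := by
  rw [ee, Complex.norm_exp_ofReal_mul_I]

lemma ee_continuous (y : EuclideanSpace ℝ (Fin d)) : Continuous (fun ξ => ee ξ y) := by
  unfold ee
  exact Complex.continuous_exp.comp <| (Complex.continuous_ofReal.comp <|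
    (continuous_const.mul ((continuous_id.inner continuous_const)))).mul continuous_const

lemma ee_sub (ξ y z : EuclideanSpace ℝ (Fin d)) :
    ee ξ (y - z) = ee ξ y * (starRingEnd ℂ) (ee ξ z) := by
  unfold ee
  rw [← Complex.exp_conj, ← Complex.exp_add]
  congr 1
  rw [inner_sub_right]
  rw [map_mul, Complex.conj_I, Complex.conj_ofReal]
  push_cast
  ring

lemma ee_re (ξ y : EuclideanSpace ℝ (Fin d)) :
    (ee ξ y).re = Real.cos (2 * Real.pi * ⟪ξ, y⟫) := by
  rw [ee, Complex.exp_ofReal_mul_I_re]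

lemma ee_int (hkhat_int : Integrable (fourierT d k)) (c : ℂ) (y : EuclideanSpace ℝ (Fin d)) :
    Integrable (fun ξ => c * ee ξ y * fourierT d k ξ) := by
  apply hkhat_int.bdd_mul (c := ‖c‖)
  · exact (continuous_const.mul (ee_continuous y)).aestronglyMeasurable
  · exact Filter.Eventually.of_forall fun ξ => by rw [norm_mul, ee_norm, mul_one]

theorem fourierT_eq : fourierT d k = 𝓕 (fun x => (k x : ℂ)) := by
  ext ξ
  rw [Real.fourier_eq']
  unfold fourierT
  congr 1
  ext x
  have h : (∑ i, ξ i * x i) = ⟪x, ξ⟫ := by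
    rw [PiLp.inner_apply]
    exact Finset.sum_congr rfl fun i _ => rfl
  rw [smul_eq_mul, mul_comm, h]
  push_cast
  ring_nf

theorem inv_eq' (hk_cont : Continuous k) (hk_int : Integrable k)
    (hkhat_int : Integrable (fourierT d k)) (y : EuclideanSpace ℝ (Fin d)) :
    ∫ ξ, ee ξ y * fourierT d k ξ = (k y : ℂ) := by
  have h1 : Integrable (fun x => (k x : ℂ)) := hk_int.ofReal
  have h2 : Continuous (fun x => (k x : ℂ)) := Complex.continuous_ofReal.comp hk_cont
  have h3 : Integrable (𝓕 (fun x => (k x : ℂ))) := by rw [← fourierT_eq]; exact hkhat_int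
  have h4 := congrFun (h2.fourierInv_fourier_eq h1 h3) y
  rw [Real.fourierInv_eq'] at h4
  rw [← h4, fourierT_eq]
  congr 1

theorem quad_rep (hk_cont : Continuous k) (hk_int : Integrable k)
    (hkhat_int : Integrable (fourierT d k))
    {N : ℕ} (x : Fin N → EuclideanSpace ℝ (Fin d)) (v : Fin N → ℝ) :
    ∑ i, ∑ j, v i * v j * k (x i - x j)
      = ∫ ξ, Complex.normSq (∑ j, (v j : ℂ) * ee ξ (x j)) * (fourierT d k ξ).re := by
  set F := fourierT d k with hF
  set S : EuclideanSpace ℝ (Fin d) → ℂ := fun ξ => ∑ j, (v j : ℂ) * ee ξ (x j) with hS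
  have hSbd : ∀ ξ, ‖S ξ‖ ≤ ∑ j, |v j| := by
    intro ξ
    refine (norm_sum_le _ _).trans ?_
    refine Finset.sum_le_sum fun j _ => ?_
    rw [norm_mul, ee_norm, mul_one, Complex.norm_real, Real.norm_eq_abs]
  have hScont : Continuous S := by
    exact continuous_finset_sum _ fun j _ => continuous_const.mul (ee_continuous (x j))
  have key : ((∑ i, ∑ j, v i * v j * k (x i - x j) : ℝ) : ℂ)
      = ∫ ξ, (S ξ * (starRingEnd ℂ) (S ξ)) * F ξ := by
    have hint : ∀ (i j : Fin N),
        Integrable (fun ξ => ((v i : ℂ) * v j) * ee ξ (x i - x j) * F ξ) :=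
      fun i j => ee_int hkhat_int _ _
    have step1 : ∀ i j : Fin N, ((v i * v j * k (x i - x j) : ℝ) : ℂ)
        = ∫ ξ, ((v i : ℂ) * v j) * ee ξ (x i - x j) * F ξ := by
      intro i j
      have := inv_eq' hk_cont hk_int hkhat_int (x i - x j)
      calc ((v i * v j * k (x i - x j) : ℝ) : ℂ)
          = ((v i : ℂ) * v j) * ∫ ξ, ee ξ (x i - x j) * F ξ := by rw [this]; push_cast; ring
        _ = ∫ ξ, ((v i : ℂ) * v j) * (ee ξ (x i - x j) * F ξ) := (integral_const_mul _ _).symm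
        _ = ∫ ξ, ((v i : ℂ) * v j) * ee ξ (x i - x j) * F ξ := by simp_rw [mul_assoc]
    push_cast
    rw [show (∑ i, ∑ j, ((v i : ℂ)) * v j * k (x i - x j))
        = ∑ i, ∑ j, ∫ ξ, ((v i : ℂ) * v j) * ee ξ (x i - x j) * F ξ from
      Finset.sum_congr rfl fun i _ => Finset.sum_congr rfl fun j _ => by
        rw [← step1]; push_cast; ring]
    have swap1 : ∀ i : Fin N, (∑ j, ∫ ξ, ((v i : ℂ) * v j) * ee ξ (x i - x j) * F ξ)
        = ∫ ξ, ∑ j, ((v i : ℂ) * v j) * ee ξ (x i - x j) * F ξ :=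
      fun i => (integral_finset_sum _ (fun j _ => hint i j)).symm
    rw [Finset.sum_congr rfl fun i _ => swap1 i,
      ← integral_finset_sum _ (fun i _ => integrable_finset_sum _ (fun j _ => hint i j))]
    · congr 1
      ext ξ
      simp_rw [← Finset.sum_mul]
      congr 1
      show _ = (∑ j, (v j : ℂ) * ee ξ (x j)) * (starRingEnd ℂ) (∑ j, (v j : ℂ) * ee ξ (x j))
      rw [map_sum, Finset.sum_mul_sum]
      refine Finset.sum_congr rfl fun i _ => Finset.sum_congr rfl fun j _ => ?_
      rw [ee_sub, map_mul, Complex.conj_ofReal]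
      ring
  have hintSS : Integrable (fun ξ => (S ξ * (starRingEnd ℂ) (S ξ)) * F ξ) := by
    apply hkhat_int.bdd_mul (c := (∑ j, |v j|) ^ 2)
    · exact (hScont.mul (Complex.continuous_conj.comp hScont)).aestronglyMeasurable
    · refine Filter.Eventually.of_forall fun ξ => ?_
      rw [norm_mul, RCLike.norm_conj, sq]
      exact mul_le_mul (hSbd ξ) (hSbd ξ) (norm_nonneg _)
        (Finset.sum_nonneg fun j _ => abs_nonneg _)
  have := congrArg Complex.re key
  rw [Complex.ofReal_re] at this
  have h5 : RCLike.re (∫ ξ, S ξ * (starRingEnd ℂ) (S ξ) * F ξ)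
      = ∫ ξ, RCLike.re (S ξ * (starRingEnd ℂ) (S ξ) * F ξ) := (integral_re hintSS).symm
  simp only [RCLike.re_to_complex] at h5
  rw [this, h5]
  congr 1
  ext ξ
  rw [Complex.mul_conj]
  simp [Complex.mul_re, hS]

theorem intFre (hk_cont : Continuous k) (hk_int : Integrable k)
    (hkhat_int : Integrable (fourierT d k)) (hk0 : k 0 = 1) :
    ∫ ξ, (fourierT d k ξ).re = 1 := by
  have h0 := inv_eq' hk_cont hk_int hkhat_int 0
  have hee : ∀ ξ : EuclideanSpace ℝ (Fin d), ee ξ 0 = 1 := by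
    intro ξ
    rw [ee]
    simp
  simp_rw [hee, one_mul, hk0, Complex.ofReal_one] at h0
  have h5 : RCLike.re (∫ ξ, fourierT d k ξ) = ∫ ξ, RCLike.re (fourierT d k ξ) :=
    (integral_re hkhat_int).symm
  simp only [RCLike.re_to_complex] at h5
  rw [← h5, h0, Complex.one_re]

theorem k_rep (hk_cont : Continuous k) (hk_int : Integrable k)
    (hkhat_int : Integrable (fourierT d k)) (hkhat_real : ∀ ξ, (fourierT d k ξ).im = 0)
    (y : EuclideanSpace ℝ (Fin d)) :
    k y = ∫ ξ, Real.cos (2 * Real.pi * ⟪ξ, y⟫) * (fourierT d k ξ).re := by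
  have h0 := inv_eq' hk_cont hk_int hkhat_int y
  have h1 : Integrable (fun ξ => ee ξ y * fourierT d k ξ) := by
    have := ee_int hkhat_int 1 y
    simpa using this
  have h5 : RCLike.re (∫ ξ, ee ξ y * fourierT d k ξ)
      = ∫ ξ, RCLike.re (ee ξ y * fourierT d k ξ) := (integral_re h1).symm
  simp only [RCLike.re_to_complex] at h5
  have := congrArg Complex.re h0
  rw [Complex.ofReal_re, h5] at this
  rw [← this]
  congr 1
  ext ξ
  rw [Complex.mul_re, hkhat_real ξ, ee_re]
  ring

theorem k_even (hk_cont : Continuous k) (hk_int : Integrable k)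
    (hkhat_int : Integrable (fourierT d k)) (hkhat_real : ∀ ξ, (fourierT d k ξ).im = 0)
    (y : EuclideanSpace ℝ (Fin d)) : k (-y) = k y := by
  rw [k_rep hk_cont hk_int hkhat_int hkhat_real, k_rep hk_cont hk_int hkhat_int hkhat_real]
  congr 1
  ext ξ
  rw [inner_neg_right]
  rw [show 2 * Real.pi * -⟪ξ, y⟫ = -(2 * Real.pi * ⟪ξ, y⟫) by ring, Real.cos_neg]

section OpBounds
variable {N : ℕ} (M : Matrix (Fin N) (Fin N) ℝ)

local notation "T" => Matrix.toEuclideanCLM (𝕜 := ℝ)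

lemma inner_toEuclideanCLM (v w : EuclideanSpace ℝ (Fin N)) :
    ⟪T M v, w⟫ = ∑ i, M.mulVec v i * w i := by
  rw [PiLp.inner_apply]; exact Finset.sum_congr rfl fun i _ => mul_comm _ _

lemma symm_toEuclideanCLM (hsym : ∀ i j, M i j = M j i) (v w : EuclideanSpace ℝ (Fin N)) :
    ⟪T M v, w⟫ = ⟪v, T M w⟫ := by
  rw [inner_toEuclideanCLM, real_inner_comm, inner_toEuclideanCLM]
  simp only [Matrix.mulVec, dotProduct, Finset.sum_mul]
  rw [Finset.sum_comm]
  refine Finset.sum_congr rfl fun i _ => Finset.sum_congr rfl fun j _ => ?_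
  rw [hsym j i]
  ring

lemma norm_toEuclideanCLM_le (hsym : ∀ i j, M i j = M j i) {c : ℝ} (hc : 0 ≤ c)
    (h0 : ∀ v : EuclideanSpace ℝ (Fin N), 0 ≤ ⟪T M v, v⟫)
    (hup : ∀ v : EuclideanSpace ℝ (Fin N), ⟪T M v, v⟫ ≤ c * ‖v‖ ^ 2) :
    ‖T M‖ ≤ c := by
  have key : ∀ v w : EuclideanSpace ℝ (Fin N), ⟪T M v, w⟫ ≤ c / 2 * (‖v‖ ^ 2 + ‖w‖ ^ 2) := by
    intro v w
    have e1 : ⟪T M (v + w), v + w⟫ - ⟪T M (v - w), v - w⟫ = 4 * ⟪T M v, w⟫ := by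
      have h1 := symm_toEuclideanCLM M hsym w v
      have h2 := real_inner_comm (T M w) v
      have h3 := real_inner_comm w (T M v)
      simp only [map_add, map_sub, inner_add_left, inner_add_right, inner_sub_left,
        inner_sub_right]
      linarith [h1, h2, h3]
    have h4 := h0 (v - w)
    have h5 := hup (v + w)
    have h6 : ‖v + w‖ ≤ ‖v‖ + ‖w‖ := norm_add_le v w
    nlinarith [e1, h4, h5, mul_self_le_mul_self (norm_nonneg (v + w)) h6,
      mul_nonneg hc (sq_nonneg (‖v‖ - ‖w‖)), hc]
  refine ContinuousLinearMap.opNorm_le_bound _ hc fun v => ?_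
  by_cases hTv : T M v = 0
  · rw [hTv, norm_zero]; exact mul_nonneg hc (norm_nonneg _)
  have hb : 0 < ‖T M v‖ := norm_pos_iff.2 hTv
  have ha : 0 < ‖v‖ := by
    rcases eq_or_ne v 0 with h | h
    · exact absurd (by rw [h, map_zero]) hTv
    · exact norm_pos_iff.2 h
  have := key (‖T M v‖ • v) (‖v‖ • T M v)
  rw [_root_.map_smul, inner_smul_left, inner_smul_right] at this
  simp only [RCLike.star_def, conj_trivial, norm_smul, Real.norm_eq_abs,
    abs_of_nonneg hb.le, abs_of_nonneg ha.le, real_inner_self_eq_norm_sq] at this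
  have h9 : ‖v‖ * ‖T M v‖ ^ 2 * ‖T M v‖ ≤ ‖v‖ * ‖T M v‖ ^ 2 * (c * ‖v‖) := by
    nlinarith [this]
  exact le_of_mul_le_mul_left h9 (by positivity)

lemma norm_inv_toEuclideanCLM_le (hM : IsUnit M) {a : ℝ} (ha : 0 < a)
    (hlow : ∀ v : EuclideanSpace ℝ (Fin N), a * ‖v‖ ^ 2 ≤ ⟪T M v, v⟫) :
    ‖T M⁻¹‖ ≤ a⁻¹ := by
  have hMdet : IsUnit M.det := (Matrix.isUnit_iff_isUnit_det M).1 hM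
  have hTT : ∀ w : EuclideanSpace ℝ (Fin N), T M (T M⁻¹ w) = w := by
    intro w
    have h1 : T M * T M⁻¹ = 1 := by
      rw [← map_mul, Matrix.mul_nonsing_inv M hMdet, map_one]
    calc T M (T M⁻¹ w) = (T M * T M⁻¹) w := rfl
      _ = w := by rw [h1]; rfl
  refine ContinuousLinearMap.opNorm_le_bound _ (inv_nonneg.2 ha.le) fun w => ?_
  set u := T M⁻¹ w with hu
  rcases eq_or_ne u 0 with h | h
  · rw [h, norm_zero]; positivity
  have hun : 0 < ‖u‖ := norm_pos_iff.2 h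
  have h1 : a * ‖u‖ ^ 2 ≤ ⟪T M u, u⟫ := hlow u
  have h2 : ⟪T M u, u⟫ ≤ ‖T M u‖ * ‖u‖ := real_inner_le_norm _ _
  rw [hTT w] at h1 h2
  rw [inv_mul_eq_div, le_div_iff₀ ha]
  nlinarith [h1, h2, hun]

end OpBounds

end Stmt13Aux

theorem stmt_13 (d N : ℕ) (k : EuclideanSpace ℝ (Fin d) → ℝ)
    (hk_cont : Continuous k) (hk_int : Integrable k)
    (hkhat_int : Integrable (fourierT d k))
    (hkhat_real : ∀ ξ, (fourierT d k ξ).im = 0)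
    (hkhat_nonneg : ∀ ξ, 0 ≤ (fourierT d k ξ).re)
    (hk0 : k 0 = 1)
    (x : Fin N → EuclideanSpace ℝ (Fin d))
    (K : Matrix (Fin N) (Fin N) ℝ) (hK : ∀ i j, K i j = k (x i - x j))
    (σ : ℝ) (hσ : 0 < σ) :
    IsUnit (K + σ ^ 2 • 1) ∧
    opNorm (K + σ ^ 2 • 1) * opNorm ((K + σ ^ 2 • 1)⁻¹) ≤ N / σ ^ 2 + 1 := by
  classical
  open Stmt13Aux in
  set M : Matrix (Fin N) (Fin N) ℝ := K + σ ^ 2 • 1 with hM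
  -- symmetry of M
  have hKsym : ∀ i j, K i j = K j i := by
    intro i j
    rw [hK i j, hK j i, show x j - x i = -(x i - x j) by abel,
      k_even hk_cont hk_int hkhat_int hkhat_real]
  have hMsym : ∀ i j, M i j = M j i := by
    intro i j
    simp only [hM, Matrix.add_apply, Matrix.smul_apply, Matrix.one_apply]
    rw [hKsym i j]
    by_cases h : i = j <;> simp [h, eq_comm]
  -- quadratic form of K is in [0, N * ‖v‖²]
  have hquadK : ∀ v : EuclideanSpace ℝ (Fin N),
      0 ≤ ∑ i, ∑ j, v i * v j * k (x i - x j) ∧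
      ∑ i, ∑ j, v i * v j * k (x i - x j) ≤ (N : ℝ) * ‖v‖ ^ 2 := by
    intro v
    have hrep := quad_rep hk_cont hk_int hkhat_int x (fun i => v i)
    have hnorm2 : ∑ j, (v j) ^ 2 = ‖v‖ ^ 2 := by
      rw [← real_inner_self_eq_norm_sq, PiLp.inner_apply]
      simp [sq]
    constructor
    · rw [hrep]
      exact integral_nonneg fun ξ => mul_nonneg (Complex.normSq_nonneg _) (hkhat_nonneg ξ)
    · rw [hrep]
      have hbd : ∀ ξ, Complex.normSq (∑ j, ((v j : ℝ) : ℂ) * ee ξ (x j)) * (fourierT d k ξ).re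
          ≤ ((N : ℝ) * ‖v‖ ^ 2) * (fourierT d k ξ).re := by
        intro ξ
        refine mul_le_mul_of_nonneg_right ?_ (hkhat_nonneg ξ)
        have h1 : ‖∑ j, ((v j : ℝ) : ℂ) * ee ξ (x j)‖ ≤ ∑ j, |v j| := by
          refine (norm_sum_le _ _).trans ?_
          refine Finset.sum_le_sum fun j _ => ?_
          rw [norm_mul, ee_norm, mul_one, Complex.norm_real, Real.norm_eq_abs]
        have h2 : Complex.normSq (∑ j, ((v j : ℝ) : ℂ) * ee ξ (x j))
            ≤ (∑ j, |v j|) ^ 2 := by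
          rw [← Complex.sq_norm]
          exact pow_le_pow_left₀ (norm_nonneg _) h1 2
        refine h2.trans ?_
        calc (∑ j, |v j|) ^ 2 ≤ (Finset.univ.card : ℝ) * ∑ j, |v j| ^ 2 :=
              sq_sum_le_card_mul_sum_sq
          _ = (N : ℝ) * ‖v‖ ^ 2 := by
              rw [Finset.card_univ, Fintype.card_fin, ← hnorm2]
              congr 1
              exact Finset.sum_congr rfl fun j _ => sq_abs _
      calc ∫ ξ, Complex.normSq (∑ j, ((v j : ℝ) : ℂ) * ee ξ (x j)) * (fourierT d k ξ).re
          ≤ ∫ ξ, ((N : ℝ) * ‖v‖ ^ 2) * (fourierT d k ξ).re := by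
            refine integral_mono_of_nonneg ?_ (hkhat_int.re.const_mul _) ?_
            · exact Filter.Eventually.of_forall fun ξ =>
                mul_nonneg (Complex.normSq_nonneg _) (hkhat_nonneg ξ)
            · exact Filter.Eventually.of_forall hbd
        _ = ((N : ℝ) * ‖v‖ ^ 2) * ∫ ξ, (fourierT d k ξ).re := integral_const_mul _ _
        _ = (N : ℝ) * ‖v‖ ^ 2 := by
            rw [intFre hk_cont hk_int hkhat_int hk0, mul_one]
  -- quadratic form of M
  have hquadM : ∀ v : EuclideanSpace ℝ (Fin N),
      ⟪Matrix.toEuclideanCLM (𝕜 := ℝ) M v, v⟫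
        = (∑ i, ∑ j, v i * v j * k (x i - x j)) + σ ^ 2 * ‖v‖ ^ 2 := by
    intro v
    rw [inner_toEuclideanCLM]
    have hmv : ∀ i, M.mulVec v i = K.mulVec v i + σ ^ 2 * v i := by
      intro i
      simp only [hM, Matrix.add_mulVec, Matrix.smul_mulVec, Matrix.one_mulVec,
        Pi.add_apply, Pi.smul_apply, smul_eq_mul]
    have hnorm2 : ∑ i, (v i) ^ 2 = ‖v‖ ^ 2 := by
      rw [← real_inner_self_eq_norm_sq, PiLp.inner_apply]
      simp [sq]
    calc ∑ i, M.mulVec v i * v i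
        = ∑ i, (K.mulVec v i * v i + σ ^ 2 * v i ^ 2) := by
          refine Finset.sum_congr rfl fun i _ => ?_
          rw [hmv i]; ring
      _ = (∑ i, K.mulVec v i * v i) + σ ^ 2 * ∑ i, v i ^ 2 := by
          rw [Finset.sum_add_distrib, Finset.mul_sum]
      _ = (∑ i, ∑ j, v i * v j * k (x i - x j)) + σ ^ 2 * ‖v‖ ^ 2 := by
          rw [hnorm2]
          congr 1
          refine Finset.sum_congr rfl fun i _ => ?_
          simp only [Matrix.mulVec, dotProduct, Finset.sum_mul]
          refine Finset.sum_congr rfl fun j _ => ?_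
          rw [hK i j]; ring
  have hlow : ∀ v : EuclideanSpace ℝ (Fin N),
      σ ^ 2 * ‖v‖ ^ 2 ≤ ⟪Matrix.toEuclideanCLM (𝕜 := ℝ) M v, v⟫ := by
    intro v
    rw [hquadM v]
    linarith [(hquadK v).1]
  have hup : ∀ v : EuclideanSpace ℝ (Fin N),
      ⟪Matrix.toEuclideanCLM (𝕜 := ℝ) M v, v⟫ ≤ ((N : ℝ) + σ ^ 2) * ‖v‖ ^ 2 := by
    intro v
    rw [hquadM v]
    nlinarith [(hquadK v).2]
  have hσ2 : (0 : ℝ) < σ ^ 2 := by positivity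
  -- M is positive definite
  have hMpd : M.PosDef := by
    refine Matrix.PosDef.of_dotProduct_mulVec_pos ?_ ?_
    · ext i j
      rw [Matrix.conjTranspose_apply, hMsym j i]
      rfl
    · intro w hw
      have hw' : ((WithLp.equiv 2 (Fin N → ℝ)).symm w) ≠ 0 := by
        simpa using hw
      have h1 := hlow ((WithLp.equiv 2 (Fin N → ℝ)).symm w)
      have h2 : (0 : ℝ) < ‖(WithLp.equiv 2 (Fin N → ℝ)).symm w‖ := norm_pos_iff.2 hw'
      have h3 : (0 : ℝ) < σ ^ 2 * ‖(WithLp.equiv 2 (Fin N → ℝ)).symm w‖ ^ 2 := by positivity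
      have h4 : ⟪Matrix.toEuclideanCLM (𝕜 := ℝ) M ((WithLp.equiv 2 (Fin N → ℝ)).symm w),
          (WithLp.equiv 2 (Fin N → ℝ)).symm w⟫ = dotProduct (star w) (M.mulVec w) := by
        rw [inner_toEuclideanCLM]
        simp only [dotProduct, Pi.star_apply, star_trivial]
        exact Finset.sum_congr rfl fun i _ => mul_comm _ _
      rw [h4] at h1
      exact lt_of_lt_of_le h3 h1
  have hMunit : IsUnit M := hMpd.isUnit
  refine ⟨hMunit, ?_⟩
  have hb1 : opNorm M ≤ (N : ℝ) + σ ^ 2 := by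
    refine norm_toEuclideanCLM_le M hMsym (by positivity) (fun v => ?_) hup
    exact le_trans (by positivity) (hlow v)
  have hb2 : opNorm M⁻¹ ≤ (σ ^ 2)⁻¹ :=
    norm_inv_toEuclideanCLM_le M hMunit hσ2 hlow
  have hn1 : 0 ≤ opNorm M := norm_nonneg _
  have hn2 : 0 ≤ opNorm M⁻¹ := norm_nonneg _
  calc opNorm M * opNorm M⁻¹ ≤ ((N : ℝ) + σ ^ 2) * (σ ^ 2)⁻¹ :=
        mul_le_mul hb1 hb2 hn2 (by positivity)
    _ = (N : ℝ) / σ ^ 2 + 1 := by field_simp
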